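/- (Hadwiger's homothetic projection theorem.) Let n ≥ 3 and let K and L be compact convex subsets of ℝⁿ with nonempty interiors. Suppose that for every unit vector u ∈ ℝⁿ, the orthogonal projections K_u and L_u of K and L onto the hyperplane u^⊥ are homothetic, i.e., there exist a > 0 and v ∈ u^⊥ with K_u = a·L_u + {v}. Then K and L are homothetic: there exist a > 0 and x ∈ ℝⁿ with K = aL + {x}. -/

import Mathlib

open MeasureTheory Pointwise

/-- Orthogonal projection of `x` onto the hyperplane `u ^⊥` (for `u` a unit vector). -/
noncomputable def projHyperplane {n : ℕ} (u : EuclideanSpace ℝ (Fin n))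
    (x : EuclideanSpace ℝ (Fin n)) : EuclideanSpace ℝ (Fin n) :=
  x - (inner ℝ x u : ℝ) • u

namespace HadwigerAux

variable {n : ℕ}

local notation "E" => EuclideanSpace ℝ (Fin n)

/-- The support function of a set. -/
noncomputable def sfn (C : Set (EuclideanSpace ℝ (Fin n)))
    (w : EuclideanSpace ℝ (Fin n)) : ℝ :=
  sSup ((fun x => (inner ℝ x w : ℝ)) '' C)

lemma cont_inner (w : EuclideanSpace ℝ (Fin n)) :
    Continuous fun x : EuclideanSpace ℝ (Fin n) => (inner ℝ x w : ℝ) :=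
  continuous_id.inner continuous_const

lemma isLUB_sfn {C : Set (EuclideanSpace ℝ (Fin n))} (hC : IsCompact C)
    (hne : C.Nonempty) (w : EuclideanSpace ℝ (Fin n)) :
    IsLUB ((fun x => (inner ℝ x w : ℝ)) '' C) (sfn C w) :=
  isLUB_csSup (hne.image _) (hC.image (cont_inner w)).bddAbove

lemma le_sfn {C : Set (EuclideanSpace ℝ (Fin n))} (hC : IsCompact C)
    (hne : C.Nonempty) {x : EuclideanSpace ℝ (Fin n)} (hx : x ∈ C)
    (w : EuclideanSpace ℝ (Fin n)) : (inner ℝ x w : ℝ) ≤ sfn C w :=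
  (isLUB_sfn hC hne w).1 (Set.mem_image_of_mem _ hx)

lemma sfn_le {C : Set (EuclideanSpace ℝ (Fin n))} (hC : IsCompact C)
    (hne : C.Nonempty) {w : EuclideanSpace ℝ (Fin n)} {c : ℝ}
    (h : ∀ x ∈ C, (inner ℝ x w : ℝ) ≤ c) : sfn C w ≤ c :=
  (isLUB_sfn hC hne w).2 (by rintro y ⟨x, hx, rfl⟩; exact h x hx)

/-- Membership characterization via support function. -/
lemma mem_iff_sfn {C : Set (EuclideanSpace ℝ (Fin n))} (hC : IsCompact C)
    (hCc : Convex ℝ C) (hne : C.Nonempty) (x : EuclideanSpace ℝ (Fin n)) :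
    x ∈ C ↔ ∀ w, (inner ℝ x w : ℝ) ≤ sfn C w := by
  constructor
  · exact fun hx w => le_sfn hC hne hx w
  · intro hx
    by_contra hxC
    obtain ⟨f, u, hfu, hux⟩ := geometric_hahn_banach_closed_point hCc hC.isClosed hxC
    set w : EuclideanSpace ℝ (Fin n) := (InnerProductSpace.toDual ℝ _).symm f with hw
    have hwf : ∀ y, (inner ℝ w y : ℝ) = f y := fun y =>
      InnerProductSpace.toDual_symm_apply
    have h1 : sfn C w ≤ u := sfn_le hC hne (fun y hy => by
      rw [real_inner_comm, hwf]; exact (hfu y hy).le)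
    have h2 : (inner ℝ x w : ℝ) = f x := by rw [real_inner_comm, hwf]
    have := hx w
    rw [h2] at this
    linarith
lemma eq_of_sfn_eq {C D : Set (EuclideanSpace ℝ (Fin n))}
    (hC : IsCompact C) (hCc : Convex ℝ C) (hCne : C.Nonempty)
    (hD : IsCompact D) (hDc : Convex ℝ D) (hDne : D.Nonempty)
    (h : ∀ w, sfn C w = sfn D w) : C = D := by
  ext x
  rw [mem_iff_sfn hC hCc hCne, mem_iff_sfn hD hDc hDne]
  simp_rw [h]

lemma cont_proj (u : EuclideanSpace ℝ (Fin n)) : Continuous (projHyperplane u) :=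
  continuous_id.sub ((continuous_id.inner (𝕜 := ℝ) continuous_const).smul continuous_const)

lemma sfn_proj {C : Set (EuclideanSpace ℝ (Fin n))}
    {u w : EuclideanSpace ℝ (Fin n)} (huw : (inner ℝ w u : ℝ) = 0) :
    sfn (projHyperplane u '' C) w = sfn C w := by
  unfold sfn
  rw [Set.image_image]
  congr 1
  apply Set.image_congr
  intro x _
  unfold projHyperplane
  have huw' : (inner ℝ u w : ℝ) = 0 := by rw [real_inner_comm]; exact huw
  rw [inner_sub_left, real_inner_smul_left, huw', mul_zero, sub_zero]

lemma sfn_smul_add_singleton {C : Set (EuclideanSpace ℝ (Fin n))}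
    (hC : IsCompact C) (hne : C.Nonempty) {a : ℝ} (ha : 0 < a)
    (v w : EuclideanSpace ℝ (Fin n)) :
    sfn (a • C + {v}) w = a * sfn C w + (inner ℝ v w : ℝ) := by
  have himg : (fun x => (inner ℝ x w : ℝ)) '' (a • C + {v})
      = (fun t => a * t + (inner ℝ v w : ℝ)) '' ((fun x => (inner ℝ x w : ℝ)) '' C) := by
    ext y
    constructor
    · rintro ⟨z, hz, rfl⟩
      rw [Set.add_singleton] at hz
      obtain ⟨p, hp, rfl⟩ := hz
      obtain ⟨c, hc, rfl⟩ := hp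
      exact ⟨(inner ℝ c w : ℝ), Set.mem_image_of_mem _ hc, by
        simp [inner_add_left, real_inner_smul_left, Finset.mul_sum, mul_assoc]⟩
    · rintro ⟨t, ⟨c, hc, rfl⟩, rfl⟩
      refine ⟨a • c + v, ?_, by simp [inner_add_left, real_inner_smul_left, Finset.mul_sum, mul_assoc]⟩
      rw [Set.add_singleton]
      exact Set.mem_image_of_mem _ (Set.smul_mem_smul_set hc)
  have hlub := isLUB_sfn hC hne w
  have hlub2 : IsLUB ((fun x => (inner ℝ x w : ℝ)) '' (a • C + {v}))
      (a * sfn C w + (inner ℝ v w : ℝ)) := by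
    rw [himg]
    constructor
    · rintro y ⟨t, ht, rfl⟩
      dsimp only
      have := hlub.1 ht
      have := mul_le_mul_of_nonneg_left this ha.le
      linarith
    · intro d hd
      have hb : sfn C w ≤ (d - (inner ℝ v w : ℝ)) / a := by
        apply hlub.2
        intro t ht
        have := hd (Set.mem_image_of_mem _ ht)
        rw [le_div_iff₀ ha]
        linarith
      have := (le_div_iff₀ ha).1 hb
      linarith
  exact hlub2.csSup_eq (by rw [himg]; exact (hne.image _).image _)

lemma finrank_span_singleton_le (w : EuclideanSpace ℝ (Fin n)) :
    Module.finrank ℝ (ℝ ∙ w) ≤ 1 := by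
  rcases eq_or_ne w 0 with rfl | hw
  · rw [Submodule.span_zero_singleton]; simp
  · rw [finrank_span_singleton hw]

/-- There is a unit vector orthogonal to two given vectors, when `3 ≤ n`. -/
lemma exists_unit_perp (hn : 3 ≤ n) (w₁ w₂ : EuclideanSpace ℝ (Fin n)) :
    ∃ u : EuclideanSpace ℝ (Fin n), ‖u‖ = 1 ∧ (inner ℝ w₁ u : ℝ) = 0 ∧
      (inner ℝ w₂ u : ℝ) = 0 := by
  set W : Submodule ℝ (EuclideanSpace ℝ (Fin n)) := (ℝ ∙ w₁) ⊔ (ℝ ∙ w₂) with hW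
  have hWle : Module.finrank ℝ W ≤ 2 := by
    calc Module.finrank ℝ W ≤ Module.finrank ℝ (ℝ ∙ w₁) + Module.finrank ℝ (ℝ ∙ w₂) :=
          Submodule.finrank_add_le_finrank_add_finrank _ _
      _ ≤ 2 := by
          have := finrank_span_singleton_le w₁
          have := finrank_span_singleton_le w₂
          omega
  have horth : Module.finrank ℝ Wᗮ + Module.finrank ℝ W = n := by
    have := Submodule.finrank_add_finrank_orthogonal (K := W)
    rw [finrank_euclideanSpace_fin] at this
    omega
  have hpos : 0 < Module.finrank ℝ Wᗮ := by omega
  obtain ⟨u', hu'W, hu'⟩ : ∃ u' ∈ Wᗮ, u' ≠ 0 := by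
    by_contra hc
    push_neg at hc
    have : Wᗮ = ⊥ := by
      ext z; simp only [Submodule.mem_bot]
      exact ⟨fun hz => by by_contra h0; exact h0 (hc z hz), fun hz => hz ▸ Wᗮ.zero_mem⟩
    rw [this, finrank_bot] at hpos
    omega
  refine ⟨‖u'‖⁻¹ • u', ?_, ?_, ?_⟩
  · rw [norm_smul, norm_inv, norm_norm, inv_mul_cancel₀ (norm_ne_zero_iff.2 hu')]
  · rw [real_inner_smul_right, (Submodule.mem_orthogonal W u').1 hu'W w₁
      (le_sup_left (b := ℝ ∙ w₂) (Submodule.mem_span_singleton_self w₁)), mul_zero]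
  · rw [real_inner_smul_right, (Submodule.mem_orthogonal W u').1 hu'W w₂
      (le_sup_right (a := ℝ ∙ w₁) (Submodule.mem_span_singleton_self w₂)), mul_zero]

/-- A body with nonempty interior has positive width in every nonzero direction. -/
lemma width_pos {L : Set (EuclideanSpace ℝ (Fin n))} (hL : IsCompact L)
    (hLi : (interior L).Nonempty) {w : EuclideanSpace ℝ (Fin n)} (hw : w ≠ 0) :
    0 < sfn L w + sfn L (-w) := by
  obtain ⟨x, hx⟩ := hLi
  obtain ⟨ε, hε, hball⟩ := Metric.isOpen_iff.1 isOpen_interior x hx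
  have hne : L.Nonempty := ⟨x, interior_subset hx⟩
  have hnw : (0:ℝ) < ‖w‖ := norm_pos_iff.2 hw
  set c : ℝ := ε / (2 * ‖w‖) with hc
  have hcpos : 0 < c := by positivity
  have hmem : ∀ s : ℝ, |s| = c → x + s • w ∈ L := by
    intro s hs
    apply interior_subset
    apply hball
    rw [Metric.mem_ball, dist_eq_norm]
    have : ‖x + s • w - x‖ = |s| * ‖w‖ := by
      rw [add_sub_cancel_left, norm_smul, Real.norm_eq_abs]
    rw [this, hs, hc]
    rw [div_mul_eq_mul_div, mul_comm 2 ‖w‖, ← div_div]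
    rw [mul_div_assoc, div_self hnw.ne', mul_one]
    linarith
  have h1 : (inner ℝ (x + c • w) w : ℝ) ≤ sfn L w :=
    le_sfn hL hne (hmem c (abs_of_pos hcpos)) w
  have h2 : (inner ℝ (x + (-c) • w) (-w) : ℝ) ≤ sfn L (-w) :=
    le_sfn hL hne (hmem (-c) (by rw [abs_neg, abs_of_pos hcpos])) (-w)
  have e1 : (inner ℝ (x + c • w) w : ℝ) = (inner ℝ x w : ℝ) + c * ‖w‖ ^ 2 := by
    rw [inner_add_left, real_inner_smul_left, real_inner_self_eq_norm_sq]
  have e2 : (inner ℝ (x + (-c) • w) (-w) : ℝ) = -(inner ℝ x w : ℝ) + c * ‖w‖ ^ 2 := by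
    rw [inner_add_left, real_inner_smul_left, inner_neg_right, inner_neg_right,
      real_inner_self_eq_norm_sq]
    ring
  have hcw : 0 < c * ‖w‖ ^ 2 := mul_pos hcpos (pow_pos hnw 2)
  linarith [h1, h2]

end HadwigerAux

open HadwigerAux in
theorem hadwiger_homothetic_projection (n : ℕ) (hn : 3 ≤ n)
    (K L : Set (EuclideanSpace ℝ (Fin n)))
    (hK : IsCompact K) (hKc : Convex ℝ K) (hKi : (interior K).Nonempty)
    (hL : IsCompact L) (hLc : Convex ℝ L) (hLi : (interior L).Nonempty)
    (h : ∀ u : EuclideanSpace ℝ (Fin n), ‖u‖ = 1 →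
      ∃ a : ℝ, 0 < a ∧ ∃ v : EuclideanSpace ℝ (Fin n), (inner ℝ v u : ℝ) = 0 ∧
        projHyperplane u '' K = a • (projHyperplane u '' L) + {v}) :
    ∃ a : ℝ, 0 < a ∧ ∃ x : EuclideanSpace ℝ (Fin n), K = a • L + {x} := by
  classical
  have hKne : K.Nonempty := hKi.mono interior_subset
  have hLne : L.Nonempty := hLi.mono interior_subset
  choose a hapos v hvu hset using h
  -- key support-function identity on each hyperplane
  have key : ∀ (u : EuclideanSpace ℝ (Fin n)) (hu : ‖u‖ = 1)
      (w : EuclideanSpace ℝ (Fin n)), (inner ℝ w u : ℝ) = 0 →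
      sfn K w = a u hu * sfn L w + (inner ℝ (v u hu) w : ℝ) := by
    intro u hu w hw
    have hSL : IsCompact (projHyperplane u '' L) := hL.image (cont_proj u)
    have hSLne : (projHyperplane u '' L).Nonempty := hLne.image _
    have := congrArg (fun S => sfn S w) (hset u hu)
    rw [sfn_proj hw, sfn_smul_add_singleton hSL hSLne (hapos u hu), sfn_proj hw] at this
    exact this
  -- fixed unit vector
  have hnpos : 0 < n := by omega
  set u₀ : EuclideanSpace ℝ (Fin n) := EuclideanSpace.single ⟨0, hnpos⟩ (1:ℝ) with hu₀def
  have hu₀ : ‖u₀‖ = 1 := by rw [hu₀def, EuclideanSpace.norm_single, norm_one]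
  set a₀ : ℝ := a u₀ hu₀ with ha₀def
  -- the ratio is constant
  have aconst : ∀ (u : EuclideanSpace ℝ (Fin n)) (hu : ‖u‖ = 1), a u hu = a₀ := by
    intro u hu
    obtain ⟨w, hwnorm, hw1, hw2⟩ := exists_unit_perp hn u u₀
    have hwne : w ≠ 0 := fun h0 => by simp [h0] at hwnorm
    have hw1' : (inner ℝ w u : ℝ) = 0 := by rw [real_inner_comm]; exact hw1
    have hw2' : (inner ℝ w u₀ : ℝ) = 0 := by rw [real_inner_comm]; exact hw2
    have hnw1 : (inner ℝ (-w) u : ℝ) = 0 := by rw [inner_neg_left, hw1', neg_zero]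
    have hnw2 : (inner ℝ (-w) u₀ : ℝ) = 0 := by rw [inner_neg_left, hw2', neg_zero]
    have e1 := key u hu w hw1'
    have e2 := key u₀ hu₀ w hw2'
    have e3 := key u hu (-w) hnw1
    have e4 := key u₀ hu₀ (-w) hnw2
    rw [inner_neg_right] at e3 e4
    have hwidth := width_pos hL hLi hwne
    have hsum : a u hu * (sfn L w + sfn L (-w)) = a₀ * (sfn L w + sfn L (-w)) := by
      rw [← ha₀def] at e2 e4
      ring_nf
      nlinarith [e1, e2, e3, e4]
    exact mul_right_cancel₀ hwidth.ne' hsum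
  -- the difference of support functions
  set f : EuclideanSpace ℝ (Fin n) → ℝ := fun w => sfn K w - a₀ * sfn L w with hfdef
  have fkey : ∀ (u : EuclideanSpace ℝ (Fin n)) (hu : ‖u‖ = 1)
      (w : EuclideanSpace ℝ (Fin n)), (inner ℝ w u : ℝ) = 0 →
      f w = (inner ℝ (v u hu) w : ℝ) := by
    intro u hu w hw
    have := key u hu w hw
    rw [aconst u hu] at this
    simp only [hfdef]
    linarith
  have fadd : ∀ w₁ w₂, f (w₁ + w₂) = f w₁ + f w₂ := by
    intro w₁ w₂
    obtain ⟨u, hu, h1, h2⟩ := exists_unit_perp hn w₁ w₂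
    have h3 : (inner ℝ (w₁ + w₂) u : ℝ) = 0 := by rw [inner_add_left, h1, h2, add_zero]
    rw [fkey u hu _ h3, fkey u hu _ h1, fkey u hu _ h2, inner_add_right]
  have fsmul : ∀ (c : ℝ) w, f (c • w) = c * f w := by
    intro c w
    obtain ⟨u, hu, h1, _⟩ := exists_unit_perp hn w w
    have h2 : (inner ℝ (c • w) u : ℝ) = 0 := by rw [real_inner_smul_left, h1, mul_zero]
    rw [fkey u hu _ h2, fkey u hu _ h1, real_inner_smul_right]
  set g : EuclideanSpace ℝ (Fin n) →ₗ[ℝ] ℝ :=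
    { toFun := f, map_add' := fadd, map_smul' := fsmul } with hgdef
  set x : EuclideanSpace ℝ (Fin n) :=
    (InnerProductSpace.toDual ℝ _).symm (LinearMap.toContinuousLinearMap g) with hxdef
  have hfx : ∀ w, f w = (inner ℝ x w : ℝ) := by
    intro w
    rw [hxdef, InnerProductSpace.toDual_symm_apply]
    rfl
  refine ⟨a₀, hapos u₀ hu₀, x, ?_⟩
  have hRcomp : IsCompact (a₀ • L + {x}) :=
    (hL.smul a₀).add isCompact_singleton
  have hRconv : Convex ℝ (a₀ • L + {x}) := (hLc.smul a₀).add (convex_singleton x)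
  have hRne : (a₀ • L + {x}).Nonempty := by
    obtain ⟨y, hy⟩ := hLne
    exact ⟨a₀ • y + x, Set.add_mem_add (Set.smul_mem_smul_set hy) rfl⟩
  apply eq_of_sfn_eq hK hKc hKne hRcomp hRconv hRne
  intro w
  rw [sfn_smul_add_singleton hL hLne (hapos u₀ hu₀) x w]
  have := hfx w
  simp only [hfdef] at this
  linarith
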